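/- The Kim–Roush 7×7 matrices A and B (with A having rows [0,0,1,1,3,0,0],[1,0,0,0,3,0,0],[0,1,0,0,3,0,0],[0,0,1,0,3,0,0],[0,0,0,0,0,0,1],[1,1,1,1,10,0,0],[1,1,1,1,0,1,0] and B having rows [0,0,1,1,3,0,0],[1,0,0,0,0,0,0],[0,1,0,0,0,0,0],[0,0,1,0,0,0,0],[0,0,0,0,0,0,1],[4,5,6,3,10,0,0],[4,5,6,3,0,1,0]) both have Bowen–Franks group isomorphic to ℤ/99ℤ. -/

import Mathlib

/-- The Bowen–Franks group of an integer matrix `A`: the cokernel `ℤⁿ/(I − A)ℤⁿ`. -/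
abbrev BowenFranks {n : ℕ} (A : Matrix (Fin n) (Fin n) ℤ) :=
  (Fin n → ℤ) ⧸ LinearMap.range (Matrix.toLin' ((1 : Matrix (Fin n) (Fin n) ℤ) - A))

/-- The Kim–Roush matrix `A`. -/
def KRA : Matrix (Fin 7) (Fin 7) ℤ :=
  !![0, 0, 1, 1, 3, 0, 0;
     1, 0, 0, 0, 3, 0, 0;
     0, 1, 0, 0, 3, 0, 0;
     0, 0, 1, 0, 3, 0, 0;
     0, 0, 0, 0, 0, 0, 1;
     1, 1, 1, 1, 10, 0, 0;
     1, 1, 1, 1, 0, 1, 0]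

/-- The Kim–Roush matrix `B`. -/
def KRB : Matrix (Fin 7) (Fin 7) ℤ :=
  !![0, 0, 1, 1, 3, 0, 0;
     1, 0, 0, 0, 0, 0, 0;
     0, 1, 0, 0, 0, 0, 0;
     0, 0, 1, 0, 0, 0, 0;
     0, 0, 0, 0, 0, 0, 1;
     4, 5, 6, 3, 10, 0, 0;
     4, 5, 6, 3, 0, 1, 0]

theorem my_cons_val_five {α : Type*} (x0 x1 x2 x3 x4 x5 x6 : α) :
    ![x0,x1,x2,x3,x4,x5,x6] 5 = x5 := rfl

theorem my_cons_val_six {α : Type*} (x0 x1 x2 x3 x4 x5 x6 : α) :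
    ![x0,x1,x2,x3,x4,x5,x6] 6 = x6 := rfl

/-- The linear functional `v ↦ c·v mod N`. -/
def dotMod (N : ℕ) {n : ℕ} (c : Fin n → ℤ) : (Fin n → ℤ) →ₗ[ℤ] ZMod N where
  toFun v := ((∑ i, c i * v i : ℤ) : ZMod N)
  map_add' v w := by push_cast [Pi.add_apply, mul_add, Finset.sum_add_distrib]; ring
  map_smul' r v := by
    simp only [Pi.smul_apply, smul_eq_mul, RingHom.id_apply, mul_left_comm, ← Finset.mul_sum]
    push_cast
    rw [zsmul_eq_mul]

/-- If the range of `I - A` equals the kernel of `dotMod N c`, and some `c i` is a unit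
mod `N`, then the Bowen–Franks group is `ZMod N`. -/
lemma mk_equiv {n N : ℕ} [NeZero N] (A : Matrix (Fin n) (Fin n) ℤ) (c : Fin n → ℤ)
    (hrange : LinearMap.range (Matrix.toLin' ((1 : Matrix (Fin n) (Fin n) ℤ) - A))
      = LinearMap.ker (dotMod N c))
    (i : Fin n) (hu : IsUnit ((c i : ZMod N))) :
    Nonempty (BowenFranks A ≃+ ZMod N) := by
  have hsurj : Function.Surjective (dotMod N c) := by
    intro z
    obtain ⟨u, hu⟩ := hu
    set m : ℤ := (((↑u⁻¹ * z : ZMod N).val : ℤ)) with hm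
    refine ⟨m • Pi.single i 1, ?_⟩
    have h1 : ∀ j, c j * ((m • Pi.single i 1 : Fin n → ℤ)) j
        = if j = i then c i * m else 0 := by
      intro j
      by_cases h : j = i <;> simp [h, Pi.single_apply, mul_comm]
    simp only [dotMod, LinearMap.coe_mk, AddHom.coe_mk, h1, Finset.sum_ite_eq',
      Finset.mem_univ, if_pos]
    push_cast
    rw [hm]
    push_cast
    rw [ZMod.natCast_val, ZMod.cast_id, ← hu, mul_comm]
    rw [mul_comm ((u⁻¹:(ZMod N)ˣ):ZMod N) z, mul_assoc]
    simp
  exact ⟨((Submodule.quotEquivOfEq _ _ hrange).trans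
    ((dotMod N c).quotKerEquivOfSurjective hsurj)).toAddEquiv⟩

/-! ### Matrix `A` -/

def MA : Matrix (Fin 7) (Fin 7) ℤ :=
  !![ 1, 0,-1,-1,-3, 0, 0;
     -1, 1, 0, 0,-3, 0, 0;
      0,-1, 1, 0,-3, 0, 0;
      0, 0,-1, 1,-3, 0, 0;
      0, 0, 0, 0, 1, 0,-1;
     -1,-1,-1,-1,-10, 1, 0;
     -1,-1,-1,-1, 0,-1, 1]

def cA : Fin 7 → ℤ := ![-8,-10,-12,-6,-98,1,1]

lemma hMA : (1 : Matrix (Fin 7) (Fin 7) ℤ) - KRA = MA := by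
  ext i j
  fin_cases i <;> fin_cases j <;> rfl

lemma forwardA (x : Fin 7 → ℤ) :
    dotProduct cA (MA.mulVec x) = 99 * x 6 := by
  have h6 : x 6 = Matrix.vecHead (Matrix.vecTail (Matrix.vecTail (Matrix.vecTail
      (Matrix.vecTail (Matrix.vecTail (Matrix.vecTail x)))))) := rfl
  rw [h6]
  simp [MA, cA, Matrix.cons_mulVec, Matrix.cons_dotProduct, Matrix.dotProduct_of_isEmpty,
    Matrix.empty_mulVec, Matrix.head_cons, Matrix.tail_cons]
  ring

lemma backwardA (v : Fin 7 → ℤ) (k : ℤ) (hk : ∑ i, cA i * v i = 99 * k) :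
    MA.mulVec
      ![ -v 0-2*v 1-2*v 2-v 3-18*v 4-18*k,
         -v 0-v 1-2*v 2-v 3-15*v 4-15*k,
         -v 0-v 1-v 2-v 3-12*v 4-12*k,
         -v 0-v 1-v 2-9*v 4-9*k,
         v 4+k,
         -4*v 0-5*v 1-6*v 2-3*v 3-44*v 4+v 5-44*k,
         k ] = v := by
  simp [cA, Fin.sum_univ_seven, my_cons_val_five, my_cons_val_six] at hk
  have hv : v = ![v 0, v 1, v 2, v 3, v 4, v 5, v 6] := by
    funext i; fin_cases i <;> rfl
  rw [hv]
  simp only [MA, Matrix.cons_mulVec, Matrix.cons_dotProduct, Matrix.dotProduct_of_isEmpty,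
    Matrix.empty_mulVec, Matrix.head_cons, Matrix.tail_cons,
    Matrix.of_apply, add_zero]
  funext i
  fin_cases i <;> simp [my_cons_val_five, my_cons_val_six] <;> linarith

lemma hrangeA : LinearMap.range (Matrix.toLin' ((1 : Matrix (Fin 7) (Fin 7) ℤ) - KRA))
    = LinearMap.ker (dotMod 99 cA) := by
  ext v
  rw [LinearMap.mem_ker, LinearMap.mem_range]
  have hker : (dotMod 99 cA v = 0) ↔ (99 : ℤ) ∣ ∑ i, cA i * v i := by
    simp only [dotMod, LinearMap.coe_mk, AddHom.coe_mk]
    exact_mod_cast ZMod.intCast_zmod_eq_zero_iff_dvd _ 99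
  rw [hker]
  constructor
  · rintro ⟨x, rfl⟩
    refine ⟨x 6, ?_⟩
    have : Matrix.toLin' ((1 : Matrix (Fin 7) (Fin 7) ℤ) - KRA) x = MA.mulVec x := by
      rw [Matrix.toLin'_apply, hMA]
    rw [this]
    exact forwardA x
  · rintro ⟨k, hk⟩
    refine ⟨![ -v 0-2*v 1-2*v 2-v 3-18*v 4-18*k,
         -v 0-v 1-2*v 2-v 3-15*v 4-15*k,
         -v 0-v 1-v 2-v 3-12*v 4-12*k,
         -v 0-v 1-v 2-9*v 4-9*k,
         v 4+k,
         -4*v 0-5*v 1-6*v 2-3*v 3-44*v 4+v 5-44*k,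
         k ], ?_⟩
    rw [Matrix.toLin'_apply, hMA]
    exact backwardA v k hk

/-! ### Matrix `B` -/

def MB : Matrix (Fin 7) (Fin 7) ℤ :=
  !![ 1, 0,-1,-1,-3, 0, 0;
     -1, 1, 0, 0, 0, 0, 0;
      0,-1, 1, 0, 0, 0, 0;
      0, 0,-1, 1, 0, 0, 0;
      0, 0, 0, 0, 1, 0,-1;
     -4,-5,-6,-3,-10, 1, 0;
     -4,-5,-6,-3, 0,-1, 1]

def cB : Fin 7 → ℤ := ![-36,-44,-54,-30,-98,1,1]

lemma hMB : (1 : Matrix (Fin 7) (Fin 7) ℤ) - KRB = MB := by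
  ext i j
  fin_cases i <;> fin_cases j <;> rfl

lemma forwardB (x : Fin 7 → ℤ) :
    dotProduct cB (MB.mulVec x) = 99 * x 6 := by
  have h6 : x 6 = Matrix.vecHead (Matrix.vecTail (Matrix.vecTail (Matrix.vecTail
      (Matrix.vecTail (Matrix.vecTail (Matrix.vecTail x)))))) := rfl
  rw [h6]
  simp [MB, cB, Matrix.cons_mulVec, Matrix.cons_dotProduct, Matrix.dotProduct_of_isEmpty,
    Matrix.empty_mulVec, Matrix.head_cons, Matrix.tail_cons]
  ring

lemma backwardB (v : Fin 7 → ℤ) (k : ℤ) (hk : ∑ i, cB i * v i = 99 * k) :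
    MB.mulVec
      ![ -v 0-2*v 1-2*v 2-v 3-3*v 4-3*k,
         -v 0-v 1-2*v 2-v 3-3*v 4-3*k,
         -v 0-v 1-v 2-v 3-3*v 4-3*k,
         -v 0-v 1-v 2-3*v 4-3*k,
         v 4+k,
         -18*v 0-22*v 1-27*v 2-15*v 3-44*v 4+v 5-44*k,
         k ] = v := by
  simp [cB, Fin.sum_univ_seven, my_cons_val_five, my_cons_val_six] at hk
  have hv : v = ![v 0, v 1, v 2, v 3, v 4, v 5, v 6] := by
    funext i; fin_cases i <;> rfl
  rw [hv]
  simp only [MB, Matrix.cons_mulVec, Matrix.cons_dotProduct, Matrix.dotProduct_of_isEmpty,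
    Matrix.empty_mulVec, Matrix.head_cons, Matrix.tail_cons,
    Matrix.of_apply, add_zero]
  funext i
  fin_cases i <;> simp [my_cons_val_five, my_cons_val_six] <;> linarith

lemma hrangeB : LinearMap.range (Matrix.toLin' ((1 : Matrix (Fin 7) (Fin 7) ℤ) - KRB))
    = LinearMap.ker (dotMod 99 cB) := by
  ext v
  rw [LinearMap.mem_ker, LinearMap.mem_range]
  have hker : (dotMod 99 cB v = 0) ↔ (99 : ℤ) ∣ ∑ i, cB i * v i := by
    simp only [dotMod, LinearMap.coe_mk, AddHom.coe_mk]
    exact_mod_cast ZMod.intCast_zmod_eq_zero_iff_dvd _ 99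
  rw [hker]
  constructor
  · rintro ⟨x, rfl⟩
    refine ⟨x 6, ?_⟩
    have : Matrix.toLin' ((1 : Matrix (Fin 7) (Fin 7) ℤ) - KRB) x = MB.mulVec x := by
      rw [Matrix.toLin'_apply, hMB]
    rw [this]
    exact forwardB x
  · rintro ⟨k, hk⟩
    refine ⟨![ -v 0-2*v 1-2*v 2-v 3-3*v 4-3*k,
         -v 0-v 1-2*v 2-v 3-3*v 4-3*k,
         -v 0-v 1-v 2-v 3-3*v 4-3*k,
         -v 0-v 1-v 2-3*v 4-3*k,
         v 4+k,
         -18*v 0-22*v 1-27*v 2-15*v 3-44*v 4+v 5-44*k,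
         k ], ?_⟩
    rw [Matrix.toLin'_apply, hMB]
    exact backwardB v k hk

/-- Both Kim–Roush matrices have Bowen–Franks group `ℤ/99ℤ`. -/
theorem kim_roush_bowenFranks :
    Nonempty (BowenFranks KRA ≃+ ZMod 99) ∧ Nonempty (BowenFranks KRB ≃+ ZMod 99) := by
  constructor
  · refine mk_equiv KRA cA hrangeA 4 ?_
    have : ((cA 4 : ℤ) : ZMod 99) = 1 := by decide
    rw [this]; exact isUnit_one
  · refine mk_equiv KRB cB hrangeB 4 ?_
    have : ((cB 4 : ℤ) : ZMod 99) = 1 := by decide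
    rw [this]; exact isUnit_one
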